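/- For n ≥ 2, the intermediate rank of A^+(B_n) is at least 2n: the set consisting of the n-support maps (2,3;id), (3,4;id), …, (n-1,n;id), (n,1;id), the maps (1,2;τ) for each adjacent transposition τ = (i, i+1) (1 ≤ i ≤ n-1), together with ξ_{(1,1)} and the singleton-support map ((1,1)→(1,1)), is an independent generating set of A^+(B_n) of cardinality 2n. -/

import Mathlib

def Bn (n : ℕ) : Type := Option (Fin n × Fin n)

def Bn.mul {n : ℕ} : Bn n → Bn n → Bn n
  | some (i, j), some (k, l) => if j = k then some (i, l) else none
  | _, _ => none

instance (n : ℕ) : Mul (Bn n) := ⟨Bn.mul⟩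

instance (n : ℕ) : Semigroup (Bn n) where
  mul_assoc a b c := by
    show Bn.mul (Bn.mul a b) c = Bn.mul a (Bn.mul b c)
    rcases a with _ | ⟨i, j⟩ <;> rcases b with _ | ⟨k, l⟩ <;> rcases c with _ | ⟨p, q⟩
    all_goals try exact rfl
    · show Bn.mul (if j = k then some (i, l) else none) none = none
      by_cases h1 : j = k
      · erw [if_pos h1]; exact rfl
      · erw [if_neg h1]; exact rfl
    · show Bn.mul (if j = k then some (i, l) else none) (some (p, q)) =
        Bn.mul (some (i, j)) (if l = p then some (k, q) else none)
      by_cases h1 : j = k <;> by_cases h2 : l = p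
      · erw [if_pos h1, if_pos h2]
        show (if l = p then some (i, q) else none) = (if j = k then some (i, q) else none)
        erw [if_pos h1, if_pos h2]
      · erw [if_pos h1, if_neg h2]
        show (if l = p then some (i, q) else none) = none
        erw [if_neg h2]
      · erw [if_neg h1, if_pos h2]
        show none = (if j = k then some (i, q) else none)
        erw [if_neg h1]
      · erw [if_neg h1, if_neg h2]
        exact rfl

/-- Maps on `Bn n`, composed left-to-right: `x (f * g) = (x f) g`. -/
def MapBn (n : ℕ) : Type := Bn n → Bn n

instance (n : ℕ) : Monoid (MapBn n) where
  mul f g := fun x => g (f x)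
  one := fun x => x
  mul_assoc _ _ _ := rfl
  one_mul _ := rfl
  mul_one _ := rfl

/-- The constant map `ξ_c`. -/
def constMap (n : ℕ) (c : Bn n) : MapBn n := fun _ => c

/-- The `n`-support map `(p, q; σ)`, sending `(i, p) ↦ (iσ, q)` and all else to `θ`. -/
def nSuppMap (n : ℕ) (p q : Fin n) (σ : Equiv.Perm (Fin n)) : MapBn n :=
  fun x =>
    match x with
    | some (i, j) => if j = p then some (σ i, q) else none
    | none => none

instance (n : ℕ) : DecidableEq (Bn n) :=
  inferInstanceAs (DecidableEq (Option (Fin n × Fin n)))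

/-- The singleton-support map `((k,l) → (p,q))`. -/
def sglMap (n : ℕ) (k l p q : Fin n) : MapBn n :=
  fun x => @ite _ (x = some (k, l)) (instDecidableEqBn n x (some (k, l))) (some (p, q)) none

/-- The multiplicative semigroup reduct `A⁺(Bₙ)`, as a set of maps on `Bn n`. -/
def APlus (n : ℕ) : Set (MapBn n) :=
  {f | (∃ c, f = constMap n c) ∨ (∃ p q σ, f = nSuppMap n p q σ) ∨
       (∃ k l p q, f = sglMap n k l p q)}

/-- Independence of a subset of a semigroup. -/
def IndependentIn {S : Type*} [Semigroup S] (U : Set S) : Prop :=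
  ∀ a ∈ U, a ∉ Subsemigroup.closure (U \ {a})

-- ===== auxiliary development =====

namespace Aux

variable {n : ℕ}

instance : Finite (MapBn n) :=
  inferInstanceAs (Finite (Option (Fin n × Fin n) → Option (Fin n × Fin n)))

lemma mul_apply (f g : MapBn n) (x : Option (Fin n × Fin n)) : (f * g) x = g (f x) := rfl

lemma funext' {f g : MapBn n} (h : ∀ x : Option (Fin n × Fin n), f x = g x) : f = g := funext h

@[simp] lemma nSupp_none (p q : Fin n) (σ : Equiv.Perm (Fin n)) :
    nSuppMap n p q σ none = none := rfl

@[simp] lemma nSupp_some (p q : Fin n) (σ : Equiv.Perm (Fin n)) (i j : Fin n) :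
    nSuppMap n p q σ (some (i, j)) = if j = p then some (σ i, q) else none := rfl

@[simp] lemma sgl_apply (k l p q : Fin n) (x : Option (Fin n × Fin n)) :
    sglMap n k l p q x = if x = some (k, l) then some (p, q) else none := rfl

@[simp] lemma const_apply (c : Bn n) (x : Option (Fin n × Fin n)) : constMap n c x = c := rfl

@[simp] lemma const_apply' (c x : Option (Fin n × Fin n)) : constMap n c x = c := rfl

lemma const_mul (c : Option (Fin n × Fin n)) (f : MapBn n) : constMap n c * f = constMap n (f c) := rfl

lemma mul_const (f : MapBn n) (c : Bn n) : f * constMap n c = constMap n c := rfl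

lemma nSupp_mul_nSupp (p q p' q' : Fin n) (σ τ : Equiv.Perm (Fin n)) :
    nSuppMap n p q σ * nSuppMap n p' q' τ =
      if q = p' then nSuppMap n p q' (σ.trans τ) else constMap n none := by
  apply funext'
  intro x
  rcases x with _ | ⟨i, j⟩ <;> split_ifs with h
  · rfl
  · rfl
  · subst h
    by_cases hj : j = p <;> simp [mul_apply, hj] <;> rfl
  · by_cases hj : j = p <;> simp [mul_apply, hj, h] <;> rfl

lemma nSupp_mul_sgl (p q k l p' q' : Fin n) (σ : Equiv.Perm (Fin n)) :
    nSuppMap n p q σ * sglMap n k l p' q' =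
      if q = l then sglMap n (σ.symm k) p p' q' else constMap n none := by
  apply funext'
  intro x
  rcases x with _ | ⟨i, j⟩
  · split_ifs <;> simp [mul_apply, nSuppMap, sgl_apply, constMap] <;> rfl
  · by_cases hj : j = p
    · subst hj
      by_cases hql : q = l
      · subst hql
        by_cases hik : i = σ.symm k
        · subst hik
          simp [mul_apply, nSuppMap, sgl_apply] <;> rfl
        · have h1 : σ i ≠ k := fun h => hik (by simp [← h])
          have h2 : (some (σ i, q) : Option (Fin n × Fin n)) ≠ some (k, q) := by
            intro h; injection h with h'; rw [Prod.mk.injEq] at h'; exact h1 h'.1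
          have h3 : (some (i, j) : Option (Fin n × Fin n)) ≠ some (σ.symm k, j) := by
            intro h; injection h with h'; rw [Prod.mk.injEq] at h'; exact hik h'.1
          simp [mul_apply, nSuppMap, sgl_apply, h2, h3] <;> rfl
      · have : (some (σ i, q) : Option (Fin n × Fin n)) ≠ some (k, l) := by
          intro h; exact hql (by injection h with h'; exact (Prod.mk.injEq _ _ _ _ ▸ h').2)
        simp [mul_apply, nSuppMap, sgl_apply, constMap, hql, this] <;> rfl
    · have h3 : (some (i, j) : Option (Fin n × Fin n)) ≠ some (σ.symm k, p) := by
        intro h; injection h with h'; rw [Prod.mk.injEq] at h'; exact hj h'.2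
      split_ifs <;> simp [mul_apply, nSuppMap, sgl_apply, constMap, hj, h3] <;> rfl

lemma sgl_mul_nSupp (k l p q p' q' : Fin n) (τ : Equiv.Perm (Fin n)) :
    sglMap n k l p q * nSuppMap n p' q' τ =
      if q = p' then sglMap n k l (τ p) q' else constMap n none := by
  apply funext'
  intro x
  rcases x with _ | ⟨i, j⟩ <;> split_ifs with h
  · rfl
  · rfl
  · subst h
    by_cases hx : i = k ∧ j = l
    · obtain ⟨rfl, rfl⟩ := hx
      simp [mul_apply] <;> rfl
    · have hx' : (some (i, j) : Option (Fin n × Fin n)) ≠ some (k, l) := by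
        intro e; injection e with e'; rw [Prod.mk.injEq] at e'; exact hx e'
      simp only [mul_apply, sgl_apply, if_neg hx', nSupp_none] <;> rfl
  · by_cases hx : i = k ∧ j = l
    · obtain ⟨rfl, rfl⟩ := hx
      simp [mul_apply, h] <;> rfl
    · have hx' : (some (i, j) : Option (Fin n × Fin n)) ≠ some (k, l) := by
        intro e; injection e with e'; rw [Prod.mk.injEq] at e'; exact hx e'
      simp only [mul_apply, sgl_apply, if_neg hx', nSupp_none] <;> rfl

lemma sgl_mul_sgl (k l p q k' l' p' q' : Fin n) :
    sglMap n k l p q * sglMap n k' l' p' q' =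
      if p = k' ∧ q = l' then sglMap n k l p' q' else constMap n none := by
  apply funext'
  intro x
  by_cases hx : x = some (k, l)
  · subst hx
    by_cases h : p = k' ∧ q = l'
    · obtain ⟨h1, h2⟩ := h; subst h1; subst h2
      simp [mul_apply, sgl_apply] <;> rfl
    · have : (some (p, q) : Option (Fin n × Fin n)) ≠ some (k', l') := by
        intro he; injection he with h'; rw [Prod.mk.injEq] at h'; exact h h'
      simp [mul_apply, sgl_apply, constMap, h, this] <;> rfl
  · split_ifs <;> simp [mul_apply, sgl_apply, constMap, hx] <;> rfl

lemma nSupp_inj {p q p' q' : Fin n} {σ τ : Equiv.Perm (Fin n)} [NeZero n]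
    (h : nSuppMap n p q σ = nSuppMap n p' q' τ) : p = p' ∧ q = q' ∧ σ = τ := by
  have h0 := congrFun h (some (0, p))
  simp only [nSupp_some, if_pos rfl] at h0
  by_cases hpp : p = p'
  · subst hpp
    rw [if_pos rfl] at h0
    injection h0 with h0'
    rw [Prod.mk.injEq] at h0'
    refine ⟨rfl, h0'.2, Equiv.ext fun k => ?_⟩
    have hk := congrFun h (some (k, p))
    simp only [nSupp_some, if_pos rfl] at hk
    injection hk with hk'
    rw [Prod.mk.injEq] at hk'
    exact hk'.1
  · rw [if_neg hpp] at h0; exact absurd h0 (by simp)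

lemma const_ne_nSupp [NeZero n] (c : Bn n) (p q : Fin n) (σ : Equiv.Perm (Fin n)) :
    constMap n c ≠ nSuppMap n p q σ := by
  intro h
  have h1 := congrFun h none
  have h2 := congrFun h (some (0, p))
  simp only [const_apply, nSupp_none, nSupp_some, if_pos rfl] at h1 h2
  rw [h1] at h2
  exact absurd h2 (by simp)

lemma const_ne_sgl (c : Bn n) (k l p q : Fin n) : constMap n c ≠ sglMap n k l p q := by
  intro h
  have h1 := congrFun h none
  have h2 := congrFun h (some (k, l))
  simp only [const_apply, sgl_apply] at h1 h2
  rw [h1] at h2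
  simp at h2

lemma sgl_ne_nSupp (hn : 2 ≤ n) (k l p q a b : Fin n) (σ : Equiv.Perm (Fin n)) :
    sglMap n k l p q ≠ nSuppMap n a b σ := by
  have : NeZero n := ⟨by omega⟩
  intro h
  -- nSupp has at least two support points in column a; sgl only one
  have h0 := congrFun h (some (0, a))
  have h1 := congrFun h (some (1, a))
  simp only [sgl_apply, nSupp_some, if_pos rfl] at h0 h1
  have hne : (0 : Fin n) ≠ 1 := by
    intro e
    have := congrArg Fin.val e
    simp [Fin.val_one', Nat.mod_eq_of_lt (by omega : 1 < n)] at this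
  by_cases e0 : (some (0, a) : Bn n) = some (k, l)
  · have e1 : (some (1, a) : Bn n) ≠ some (k, l) := by
      intro e
      injection e0 with e0'; injection e with e1'
      rw [Prod.mk.injEq] at e0' e1'
      exact hne (e0'.1.trans e1'.1.symm)
    rw [if_neg e1] at h1
    exact absurd h1.symm (by simp)
  · rw [if_neg e0] at h0
    exact absurd h0.symm (by simp)

/-- Invariant class of maps: constants, singleton-support maps, and `n`-support maps
whose data satisfies `P`. -/
def classSet (n : ℕ) (P : Fin n → Fin n → Equiv.Perm (Fin n) → Prop) : Set (MapBn n) :=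
  {f | (∃ c, f = constMap n c) ∨ (∃ k l p q, f = sglMap n k l p q) ∨
       (∃ p q σ, P p q σ ∧ f = nSuppMap n p q σ)}

/-- `classSet` is a subsemigroup when `P` is closed under chained composition. -/
def classSub (n : ℕ) (P : Fin n → Fin n → Equiv.Perm (Fin n) → Prop)
    (hP : ∀ p q q' (σ τ : Equiv.Perm (Fin n)), P p q σ → P q q' τ → P p q' (σ.trans τ)) :
    Subsemigroup (MapBn n) where
  carrier := classSet n P
  mul_mem' := by
    rintro f g hf hg
    rcases hg with ⟨c, rfl⟩ | hg
    · exact Or.inl ⟨c, mul_const f c⟩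
    rcases hf with ⟨c, rfl⟩ | hf
    · exact Or.inl ⟨g c, const_mul c g⟩
    rcases hf with ⟨k, l, p, q, rfl⟩ | ⟨p, q, σ, hpq, rfl⟩ <;>
      rcases hg with ⟨k', l', p', q', rfl⟩ | ⟨p', q', τ, hpq', rfl⟩
    · rw [sgl_mul_sgl]
      split_ifs
      · exact Or.inr (Or.inl ⟨_, _, _, _, rfl⟩)
      · exact Or.inl ⟨none, rfl⟩
    · rw [sgl_mul_nSupp]
      split_ifs
      · exact Or.inr (Or.inl ⟨_, _, _, _, rfl⟩)
      · exact Or.inl ⟨none, rfl⟩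
    · rw [nSupp_mul_sgl]
      split_ifs
      · exact Or.inr (Or.inl ⟨_, _, _, _, rfl⟩)
      · exact Or.inl ⟨none, rfl⟩
    · rw [nSupp_mul_nSupp]
      split_ifs with h
      · subst h
        exact Or.inr (Or.inr ⟨p, q', σ.trans τ, hP _ _ _ _ _ hpq hpq', rfl⟩)
      · exact Or.inl ⟨none, rfl⟩

lemma classSet_trivial : classSet n (fun _ _ _ => True) = APlus n := by
  ext f
  constructor
  · rintro (h | h | ⟨p, q, σ, _, rfl⟩)
    · exact Or.inl h
    · exact Or.inr (Or.inr h)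
    · exact Or.inr (Or.inl ⟨p, q, σ, rfl⟩)
  · rintro (h | ⟨p, q, σ, rfl⟩ | h)
    · exact Or.inl h
    · exact Or.inr (Or.inr ⟨p, q, σ, trivial, rfl⟩)
    · exact Or.inr (Or.inl h)

lemma trans_one' (σ : Equiv.Perm (Fin n)) : σ.trans (1 : Equiv.Perm (Fin n)) = σ :=
  Equiv.trans_refl σ

lemma one_trans' (σ : Equiv.Perm (Fin n)) : (1 : Equiv.Perm (Fin n)).trans σ = σ :=
  Equiv.refl_trans σ

lemma swap_trans_swap (a b : Fin n) :
    (Equiv.swap a b).trans (Equiv.swap a b) = (1 : Equiv.Perm (Fin n)) :=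
  Equiv.swap_swap a b

/-- The generating set. -/
def Xset (n : ℕ) [NeZero n] : Set (MapBn n) :=
  {f | ∃ i : Fin n, i ≠ 0 ∧ f = nSuppMap n i (i + 1) 1} ∪
  {f | ∃ i : Fin n, (i : ℕ) + 1 < n ∧ f = nSuppMap n 0 1 (Equiv.swap i (i + 1))} ∪
  {constMap n (some (0, 0)), sglMap n 0 0 0 0}

section Gen

variable [NeZero n] (hn : 2 ≤ n)

local notation "M" => Subsemigroup.closure (Xset n)

include hn

lemma val_one'' : ((1 : Fin n) : ℕ) = 1 := by
  rw [Fin.val_one', Nat.mod_eq_of_lt (by omega : 1 < n)]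

lemma one_ne_zero'' : (1 : Fin n) ≠ 0 := by
  intro h
  have := congrArg Fin.val h
  rw [val_one'' hn] at this
  simp at this

lemma val_add_one' {i : Fin n} (h : (i : ℕ) + 1 < n) : ((i + 1 : Fin n) : ℕ) = (i : ℕ) + 1 := by
  have : ((1 : Fin n) : ℕ) = 1 := val_one'' hn
  rw [Fin.val_add, this, Nat.mod_eq_of_lt h]

omit hn in
lemma A_mem {i : Fin n} (hi : i ≠ 0) : nSuppMap n i (i + 1) 1 ∈ M :=
  Subsemigroup.subset_closure (Or.inl (Or.inl ⟨i, hi, rfl⟩))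

omit hn in
lemma B_mem {i : Fin n} (hi : (i : ℕ) + 1 < n) :
    nSuppMap n 0 1 (Equiv.swap i (i + 1)) ∈ M :=
  Subsemigroup.subset_closure (Or.inl (Or.inr ⟨i, hi, rfl⟩))

omit hn in
lemma constX_mem : constMap n (some (0, 0)) ∈ M :=
  Subsemigroup.subset_closure (Or.inr (Or.inl rfl))

omit hn in
lemma sglX_mem : sglMap n 0 0 0 0 ∈ M :=
  Subsemigroup.subset_closure (Or.inr (Or.inr rfl))

lemma stepA : ∀ m : ℕ, ∀ i : Fin n, i ≠ 0 → (i : ℕ) + m = n → nSuppMap n i 0 1 ∈ M := by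
  intro m
  induction m with
  | zero => intro i _ h; have := i.isLt; omega
  | succ m ih =>
    intro i hi h
    rcases Nat.eq_zero_or_pos m with rfl | hm
    · have h0 : i + 1 = 0 := by
        apply Fin.ext
        rw [Fin.val_add, val_one'' hn, Fin.val_zero, show (i : ℕ) + 1 = n by omega,
          Nat.mod_self]
      have := A_mem hi
      rwa [h0] at this
    · have h1 : (i : ℕ) + 1 < n := by omega
      have hv : ((i + 1 : Fin n) : ℕ) = (i : ℕ) + 1 := val_add_one' hn h1
      have hi1 : (i + 1 : Fin n) ≠ 0 := by
        intro e; rw [e] at hv; simp at hv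
      have hmem := mul_mem (A_mem hi) (ih (i + 1) hi1 (by omega))
      rwa [nSupp_mul_nSupp, if_pos rfl, trans_one'] at hmem

lemma nSupp_x0_mem {i : Fin n} (hi : i ≠ 0) : nSuppMap n i 0 1 ∈ M :=
  stepA hn (n - (i : ℕ)) i hi (by have := i.isLt; omega)

lemma swapB_00_mem {j : Fin n} (hj : (j : ℕ) + 1 < n) :
    nSuppMap n 0 0 (Equiv.swap j (j + 1)) ∈ M := by
  have hmem := mul_mem (B_mem hj) (nSupp_x0_mem hn (one_ne_zero'' hn))
  rwa [nSupp_mul_nSupp, if_pos rfl, trans_one'] at hmem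

lemma nSupp00_one_mem : nSuppMap n 0 0 (1 : Equiv.Perm (Fin n)) ∈ M := by
  have h0 : ((0 : Fin n) : ℕ) + 1 < n := by simp; omega
  have h := mul_mem (swapB_00_mem hn h0) (swapB_00_mem hn h0)
  rwa [nSupp_mul_nSupp, if_pos rfl, swap_trans_swap] at h

/-- Permutations σ with `nSuppMap n 0 0 σ ∈ M` form a submonoid. -/
def Kmon : Submonoid (Equiv.Perm (Fin n)) where
  carrier := {σ | nSuppMap n 0 0 σ ∈ M}
  one_mem' := nSupp00_one_mem hn
  mul_mem' := by
    intro σ τ hσ hτ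
    have h := mul_mem (show nSuppMap n 0 0 τ ∈ M from hτ) (show nSuppMap n 0 0 σ ∈ M from hσ)
    rw [nSupp_mul_nSupp, if_pos rfl] at h
    rwa [show τ.trans σ = σ * τ from rfl] at h

lemma nSupp00_mem (σ : Equiv.Perm (Fin n)) : nSuppMap n 0 0 σ ∈ M := by
  obtain ⟨m, rfl⟩ : ∃ m, n = m + 1 := ⟨n - 1, by omega⟩
  have htop : (⊤ : Submonoid (Equiv.Perm (Fin (m + 1)))) ≤ Kmon hn := by
    rw [← Equiv.Perm.mclosure_swap_castSucc_succ m]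
    apply Submonoid.closure_le.mpr
    rintro _ ⟨i, rfl⟩
    have hlt : ((i.castSucc : Fin (m + 1)) : ℕ) + 1 < m + 1 := by
      simp only [Fin.coe_castSucc]; omega
    have hsucc : i.succ = i.castSucc + 1 := by
      apply Fin.ext
      rw [val_add_one' hn hlt]
      simp
    have hmem : nSuppMap (m + 1) 0 0 (Equiv.swap i.castSucc i.succ) ∈
        Subsemigroup.closure (Xset (m + 1)) := by
      rw [hsucc]; exact swapB_00_mem hn hlt
    exact hmem
  exact htop (Submonoid.mem_top σ)

lemma nSupp01_one_mem : nSuppMap n 0 1 (1 : Equiv.Perm (Fin n)) ∈ M := by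
  have h0 : ((0 : Fin n) : ℕ) + 1 < n := by simp; omega
  have hB : nSuppMap n 0 1 (Equiv.swap 0 (0 + 1)) ∈ M := B_mem h0
  rw [zero_add] at hB
  have h := mul_mem (nSupp00_mem hn (Equiv.swap 0 1)) hB
  rwa [nSupp_mul_nSupp, if_pos rfl, swap_trans_swap] at h

lemma stepC : ∀ m : ℕ, 1 ≤ m → ∀ h2 : m < n, nSuppMap n 1 ⟨m, h2⟩ 1 ∈ M := by
  intro m
  induction m with
  | zero => omega
  | succ m ih =>
    intro _ hlt
    rcases Nat.eq_zero_or_pos m with rfl | hm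
    · -- nSupp 1 1 1 = nSupp 1 0 1 * nSupp 0 1 1
      have h := mul_mem (nSupp_x0_mem hn (one_ne_zero'' hn)) (nSupp01_one_mem hn)
      rw [nSupp_mul_nSupp, if_pos rfl, trans_one'] at h
      convert h using 2
      apply Fin.ext
      rw [val_one'' hn]
    · have hmem := ih hm (by omega)
      have hm0 : (⟨m, by omega⟩ : Fin n) ≠ 0 := by
        intro e; have := congrArg Fin.val e; simp at this; omega
      have hA := A_mem (i := ⟨m, by omega⟩) hm0
      have hv : ((⟨m, by omega⟩ : Fin n) + 1 : Fin n) = ⟨m + 1, hlt⟩ := by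
        apply Fin.ext
        rw [val_add_one' hn (by simpa using hlt)]
      rw [hv] at hA
      have h := mul_mem hmem hA
      rwa [nSupp_mul_nSupp, if_pos rfl, trans_one'] at h

lemma nSupp_1q_mem (q : Fin n) : nSuppMap n 1 q 1 ∈ M := by
  by_cases hq : q = 0
  · subst hq; exact nSupp_x0_mem hn (one_ne_zero'' hn)
  · have hq1 : 1 ≤ (q : ℕ) := by
      rcases Nat.eq_zero_or_pos (q : ℕ) with h | h
      · exact absurd (Fin.ext h) hq
      · exact h
    have := stepC hn (q : ℕ) hq1 q.isLt
    rwa [show (⟨(q : ℕ), by omega⟩ : Fin n) = q from Fin.ext rfl] at this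

lemma nSupp_0q_mem (q : Fin n) : nSuppMap n 0 q 1 ∈ M := by
  by_cases hq : q = 0
  · subst hq; exact nSupp00_one_mem hn
  · have h := mul_mem (nSupp01_one_mem hn) (nSupp_1q_mem hn q)
    rwa [nSupp_mul_nSupp, if_pos rfl, trans_one'] at h

lemma nSupp_p0_mem (p : Fin n) : nSuppMap n p 0 1 ∈ M := by
  by_cases hp : p = 0
  · subst hp; exact nSupp00_one_mem hn
  · exact nSupp_x0_mem hn hp

lemma allNSupp_mem (p q : Fin n) (σ : Equiv.Perm (Fin n)) : nSuppMap n p q σ ∈ M := by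
  have h1 := mul_mem (nSupp_p0_mem hn p) (nSupp00_mem hn σ)
  rw [nSupp_mul_nSupp, if_pos rfl, one_trans'] at h1
  have h2 := mul_mem h1 (nSupp_0q_mem hn q)
  rwa [nSupp_mul_nSupp, if_pos rfl, trans_one'] at h2

lemma allConst_mem (c : Bn n) : constMap n c ∈ M := by
  rcases c with _ | ⟨p, q⟩
  · have h := mul_mem (constX_mem (n := n)) (allNSupp_mem hn 1 0 1)
    rw [const_mul] at h
    have he : nSuppMap n 1 0 1 (some (0, 0)) = none := by
      simp [nSuppMap, Ne.symm (one_ne_zero'' hn)] <;> rfl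
    rwa [he] at h
  · have h := mul_mem (constX_mem (n := n)) (allNSupp_mem hn 0 q (Equiv.swap 0 p))
    rw [const_mul] at h
    have he : nSuppMap n 0 q (Equiv.swap 0 p) (some (0, 0)) = some (p, q) := by
      simp [nSuppMap, Equiv.swap_apply_left] <;> rfl
    rwa [he] at h

lemma allSgl_mem (k l p q : Fin n) : sglMap n k l p q ∈ M := by
  have h1 := mul_mem (allNSupp_mem hn l 0 (Equiv.swap k 0)) (sglX_mem (n := n))
  rw [nSupp_mul_sgl, if_pos rfl] at h1
  have h2 := mul_mem h1 (allNSupp_mem hn 0 q (Equiv.swap 0 p))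
  rw [sgl_mul_nSupp, if_pos rfl] at h2
  rw [Equiv.symm_swap, Equiv.swap_apply_right, Equiv.swap_apply_left] at h2
  exact h2

lemma closure_eq_APlus : (Subsemigroup.closure (Xset n) : Set (MapBn n)) = APlus n := by
  apply le_antisymm
  · have hle : Subsemigroup.closure (Xset n) ≤
        classSub n (fun _ _ _ => True) (fun _ _ _ _ _ _ _ => trivial) := by
      apply Subsemigroup.closure_le.mpr
      rintro f (( ⟨i, hi, rfl⟩ | ⟨i, hi, rfl⟩) | hf)
      · exact Or.inr (Or.inr ⟨_, _, _, trivial, rfl⟩)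
      · exact Or.inr (Or.inr ⟨_, _, _, trivial, rfl⟩)
      · rcases hf with rfl | rfl
        · exact Or.inl ⟨_, rfl⟩
        · exact Or.inr (Or.inl ⟨_, _, _, _, rfl⟩)
    intro f hf
    have h2 : f ∈ classSet n (fun _ _ _ => True) := hle hf
    rwa [classSet_trivial] at h2
  · rintro f (⟨c, rfl⟩ | ⟨p, q, σ, rfl⟩ | ⟨k, l, p, q, rfl⟩)
    · exact allConst_mem hn c
    · exact allNSupp_mem hn p q σ
    · exact allSgl_mem hn k l p q

end Gen

section Indep

variable [NeZero n]

/-- Maps fixing `θ` form a subsemigroup. -/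
def noneFix (n : ℕ) : Subsemigroup (MapBn n) where
  carrier := {f | f none = none}
  mul_mem' := by
    intro f g hf hg
    show (f * g) none = none
    rw [mul_apply, hf, hg]

/-- Constants and `n`-support maps form a subsemigroup. -/
def cnSub (n : ℕ) : Subsemigroup (MapBn n) where
  carrier := {f | (∃ c, f = constMap n c) ∨ ∃ p q σ, f = nSuppMap n p q σ}
  mul_mem' := by
    rintro f g hf hg
    rcases hg with ⟨c, rfl⟩ | ⟨p', q', τ, rfl⟩
    · exact Or.inl ⟨c, mul_const f c⟩
    rcases hf with ⟨c, rfl⟩ | ⟨p, q, σ, rfl⟩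
    · exact Or.inl ⟨_, const_mul c _⟩
    · rw [nSupp_mul_nSupp]
      split_ifs with h
      · exact Or.inr ⟨_, _, _, rfl⟩
      · exact Or.inl ⟨none, rfl⟩

lemma indepX (hn : 2 ≤ n) : IndependentIn (Xset n) := by
  rintro a ha hmem
  rcases ha with (⟨i, hi, rfl⟩ | ⟨i, hi, rfl⟩) | (rfl | rfl)
  · -- a = A_i
    set a := nSuppMap n i (i + 1) 1 with ha
    have hle : Subsemigroup.closure (Xset n \ {a}) ≤
        classSub n (fun p _ _ => p ≠ i) (fun p q q' σ τ h _ => h) := by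
      apply Subsemigroup.closure_le.mpr
      rintro f ⟨hfX, hfne⟩
      rcases hfX with (⟨j, hj, rfl⟩ | ⟨j, hj, rfl⟩) | (rfl | rfl)
      · refine Or.inr (Or.inr ⟨j, j + 1, 1, ?_, rfl⟩)
        intro e; subst e; exact hfne rfl
      · exact Or.inr (Or.inr ⟨0, 1, _, fun e => hi e.symm, rfl⟩)
      · exact Or.inl ⟨_, rfl⟩
      · exact Or.inr (Or.inl ⟨0, 0, 0, 0, rfl⟩)
    have hmem' := hle hmem
    rcases hmem' with ⟨c, hc⟩ | ⟨k, l, p, q, hc⟩ | ⟨p, q, σ, hP, hc⟩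
    · exact const_ne_nSupp c _ _ _ hc.symm
    · exact sgl_ne_nSupp hn k l p q _ _ _ hc.symm
    · exact hP (nSupp_inj hc.symm).1
  · -- a = B_i
    set a := nSuppMap n 0 1 (Equiv.swap i (i + 1)) with ha
    have hiv : ((i + 1 : Fin n) : ℕ) = (i : ℕ) + 1 := val_add_one' hn hi
    have hle : Subsemigroup.closure (Xset n \ {a}) ≤
        classSub n (fun _ _ σ => ∀ k : Fin n, (k : ℕ) ≤ (i : ℕ) → ((σ k : Fin n) : ℕ) ≤ (i : ℕ))
          (fun p q q' σ τ hσ hτ => by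
            intro k hk; rw [Equiv.trans_apply]; exact hτ _ (hσ k hk)) := by
      apply Subsemigroup.closure_le.mpr
      rintro f ⟨hfX, hfne⟩
      rcases hfX with (⟨j, hj, rfl⟩ | ⟨j, hj, rfl⟩) | (rfl | rfl)
      · refine Or.inr (Or.inr ⟨j, j + 1, 1, ?_, rfl⟩)
        intro k hk
        simpa using hk
      · refine Or.inr (Or.inr ⟨0, 1, _, ?_, rfl⟩)
        have hji : j ≠ i := by intro e; subst e; exact hfne rfl
        have hjv : (j : ℕ) ≠ (i : ℕ) := fun e => hji (Fin.ext e)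
        have hj1 : ((j + 1 : Fin n) : ℕ) = (j : ℕ) + 1 := val_add_one' hn hj
        intro k hk
        rcases lt_or_gt_of_ne hjv with hlt | hgt
        · rcases eq_or_ne k j with rfl | hkj
          · rw [Equiv.swap_apply_left, hj1]; omega
          · rcases eq_or_ne k (j + 1) with rfl | hkj1
            · rw [Equiv.swap_apply_right]
              rw [hj1] at hk; omega
            · rw [Equiv.swap_apply_of_ne_of_ne hkj hkj1]; exact hk
        · have hkj : k ≠ j := by intro e; rw [e] at hk; omega
          have hkj1 : k ≠ j + 1 := by intro e; rw [e, hj1] at hk; omega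
          rw [Equiv.swap_apply_of_ne_of_ne hkj hkj1]; exact hk
      · exact Or.inl ⟨_, rfl⟩
      · exact Or.inr (Or.inl ⟨0, 0, 0, 0, rfl⟩)
    have hmem' := hle hmem
    rcases hmem' with ⟨c, hc⟩ | ⟨k, l, p, q, hc⟩ | ⟨p, q, σ, hP, hc⟩
    · exact const_ne_nSupp c _ _ _ hc.symm
    · exact sgl_ne_nSupp hn k l p q _ _ _ hc.symm
    · obtain ⟨hp, hq, hσ⟩ := nSupp_inj hc.symm
      subst hσ
      have := hP i (le_refl _)
      rw [Equiv.swap_apply_left, hiv] at this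
      omega
  · -- a = constMap n (some (0,0))
    set a := constMap n (some (0, 0)) with ha
    have hle : Subsemigroup.closure (Xset n \ {a}) ≤ noneFix n := by
      apply Subsemigroup.closure_le.mpr
      rintro f ⟨hfX, hfne⟩
      rcases hfX with (⟨j, hj, rfl⟩ | ⟨j, hj, rfl⟩) | (rfl | rfl)
      · exact rfl
      · exact rfl
      · exact absurd rfl hfne
      · show sglMap n 0 0 0 0 none = none
        rfl
    have hmem' := hle hmem
    have : (some ((0 : Fin n), (0 : Fin n)) : Bn n) = none := hmem'
    simp at this
  · -- a = sglMap n 0 0 0 0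
    set a := sglMap n 0 0 0 0 with ha
    have hle : Subsemigroup.closure (Xset n \ {a}) ≤ cnSub n := by
      apply Subsemigroup.closure_le.mpr
      rintro f ⟨hfX, hfne⟩
      rcases hfX with (⟨j, hj, rfl⟩ | ⟨j, hj, rfl⟩) | (rfl | rfl)
      · exact Or.inr ⟨_, _, _, rfl⟩
      · exact Or.inr ⟨_, _, _, rfl⟩
      · exact Or.inl ⟨_, rfl⟩
      · exact absurd rfl hfne
    have hmem' := hle hmem
    rcases hmem' with ⟨c, hc⟩ | ⟨p, q, σ, hc⟩
    · exact const_ne_sgl c 0 0 0 0 hc.symm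
    · exact sgl_ne_nSupp hn 0 0 0 0 p q σ hc

end Indep

section Card

variable [NeZero n]

lemma swap_adj_inj (hn : 2 ≤ n) {i j : Fin n} (hi : (i : ℕ) + 1 < n) (hj : (j : ℕ) + 1 < n)
    (h : Equiv.swap i (i + 1) = Equiv.swap j (j + 1)) : i = j := by
  by_contra hne
  have hiv : ((i + 1 : Fin n) : ℕ) = (i : ℕ) + 1 := val_add_one' hn hi
  have hjv : ((j + 1 : Fin n) : ℕ) = (j : ℕ) + 1 := val_add_one' hn hj
  have hv : (i : ℕ) ≠ (j : ℕ) := fun e => hne (Fin.ext e)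
  rcases lt_or_gt_of_ne hv with hlt | hgt
  · have he : Equiv.swap i (i + 1) i = Equiv.swap j (j + 1) i := by rw [h]
    rw [Equiv.swap_apply_left] at he
    rw [Equiv.swap_apply_of_ne_of_ne (fun e => by rw [e] at hlt; omega)
      (fun e => by rw [e] at hv; rw [hjv] at hv; omega)] at he
    have := congrArg Fin.val he
    rw [hiv] at this
    omega
  · have he : Equiv.swap i (i + 1) j = Equiv.swap j (j + 1) j := by rw [h]
    rw [Equiv.swap_apply_left] at he
    rw [Equiv.swap_apply_of_ne_of_ne (fun e => by rw [e] at hgt; omega)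
      (fun e => by have := congrArg Fin.val e; rw [hiv] at this; omega)] at he
    have := congrArg Fin.val he
    rw [hjv] at this
    omega

lemma ncardX (hn : 2 ≤ n) : (Xset n).ncard = 2 * n := by
  set SA : Set (MapBn n) := {f | ∃ i : Fin n, i ≠ 0 ∧ f = nSuppMap n i (i + 1) 1} with hSAdef
  set SB : Set (MapBn n) :=
    {f | ∃ i : Fin n, (i : ℕ) + 1 < n ∧ f = nSuppMap n 0 1 (Equiv.swap i (i + 1))} with hSBdef
  set SC : Set (MapBn n) := {constMap n (some (0, 0)), sglMap n 0 0 0 0} with hSCdef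
  have hSA : SA = (fun i : Fin n => nSuppMap n i (i + 1) 1) '' {i | i ≠ 0} := by
    ext f
    constructor
    · rintro ⟨i, h, rfl⟩; exact ⟨i, h, rfl⟩
    · rintro ⟨i, h, rfl⟩; exact ⟨i, h, rfl⟩
  have hSB : SB = (fun i : Fin n => nSuppMap n 0 1 (Equiv.swap i (i + 1))) ''
      {i | (i : ℕ) + 1 < n} := by
    ext f
    constructor
    · rintro ⟨i, h, rfl⟩; exact ⟨i, h, rfl⟩
    · rintro ⟨i, h, rfl⟩; exact ⟨i, h, rfl⟩
  have hcompl : ∀ x : Fin n, ({x}ᶜ : Set (Fin n)).ncard = n - 1 := by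
    intro x
    have h1 := Set.ncard_add_ncard_compl ({x} : Set (Fin n)) (Set.toFinite _) (Set.toFinite _)
    rw [Set.ncard_singleton, Nat.card_eq_fintype_card, Fintype.card_fin] at h1
    omega
  have hA : SA.ncard = n - 1 := by
    rw [hSA, Set.ncard_image_of_injOn]
    · have : {i : Fin n | i ≠ 0} = ({(0 : Fin n)}ᶜ : Set (Fin n)) := rfl
      rw [this, hcompl]
    · intro i _ j _ h
      exact (nSupp_inj h).1
  have hB : SB.ncard = n - 1 := by
    rw [hSB, Set.ncard_image_of_injOn]
    · have he : {i : Fin n | (i : ℕ) + 1 < n} = ({(⟨n - 1, by omega⟩ : Fin n)}ᶜ : Set (Fin n)) := by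
        ext i
        simp only [Set.mem_setOf_eq, Set.mem_compl_iff, Set.mem_singleton_iff]
        constructor
        · intro h e
          rw [e] at h
          simp at h
          omega
        · intro h
          have := i.isLt
          rcases Nat.lt_or_ge ((i : ℕ) + 1) n with h' | h'
          · exact h'
          · exact absurd (Fin.ext (by omega : (i : ℕ) = n - 1)) h
      rw [he, hcompl]
    · intro i hi j hj h
      exact swap_adj_inj hn hi hj (nSupp_inj h).2.2
  have hC : SC.ncard = 2 := Set.ncard_pair (const_ne_sgl _ _ _ _ _)
  have hdAB : Disjoint SA SB := by
    rw [Set.disjoint_left]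
    rintro f ⟨i, hi, rfl⟩ ⟨j, hj, he⟩
    exact hi (nSupp_inj he).1
  have hdC : Disjoint (SA ∪ SB) SC := by
    rw [Set.disjoint_left]
    rintro f (⟨i, hi, rfl⟩ | ⟨i, hi, rfl⟩) (he | he)
    · exact const_ne_nSupp _ _ _ _ he.symm
    · exact sgl_ne_nSupp hn _ _ _ _ _ _ _ he.symm
    · exact const_ne_nSupp _ _ _ _ he.symm
    · exact sgl_ne_nSupp hn _ _ _ _ _ _ _ he.symm
  have hXeq : Xset n = SA ∪ SB ∪ SC := rfl
  rw [hXeq, Set.ncard_union_eq hdC (Set.toFinite _) (Set.toFinite _),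
    Set.ncard_union_eq hdAB (Set.toFinite _) (Set.toFinite _), hA, hB, hC]
  omega

end Card

end Aux

theorem intermediate_rank_lb (n : ℕ) [NeZero n] (hn : 2 ≤ n) :
    let X : Set (MapBn n) :=
      {f | ∃ i : Fin n, i ≠ 0 ∧ f = nSuppMap n i (i + 1) 1} ∪
      {f | ∃ i : Fin n, (i : ℕ) + 1 < n ∧ f = nSuppMap n 0 1 (Equiv.swap i (i + 1))} ∪
      {constMap n (some (0, 0)), sglMap n 0 0 0 0}
    IndependentIn X ∧ (Subsemigroup.closure X : Set (MapBn n)) = APlus n ∧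
    X.ncard = 2 * n ∧
    2 * n ≤ sSup {k | ∃ U : Set (MapBn n), U ⊆ APlus n ∧ U.ncard = k ∧
      IndependentIn U ∧ (Subsemigroup.closure U : Set (MapBn n)) = APlus n} := by
  intro X
  have hX : X = Aux.Xset n := rfl
  have hindep := Aux.indepX hn
  have hclos := Aux.closure_eq_APlus hn
  have hcard := Aux.ncardX hn
  rw [hX]
  refine ⟨hindep, hclos, hcard, ?_⟩
  have hXsub : Aux.Xset n ⊆ APlus n := fun f hf => hclos ▸ Subsemigroup.subset_closure hf
  apply le_csSup
  · refine ⟨Nat.card (MapBn n), ?_⟩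
    rintro k ⟨U, hU, rfl, _, _⟩
    calc U.ncard ≤ (Set.univ : Set (MapBn n)).ncard :=
          Set.ncard_le_ncard (Set.subset_univ U) (Set.toFinite _)
      _ = Nat.card (MapBn n) := Set.ncard_univ _
  · exact ⟨Aux.Xset n, hXsub, hcard, hindep, hclos⟩
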